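/- Let δ ∈ (0,1), Λ < 0, R > 0, and let γ̄ : [0, R] → ℝ be a positive C¹ function with γ̄(0) = 1 satisfying (log γ̄)'(r) = 2|Λ| r e^{2λ(r)}, where e^{2λ(r)} ∈ [0, 1/(δ + |Λ|r²)] for all r ∈ [0,R]. Then for all r ∈ [0,R]: 1 ≤ γ̄(r) ≤ 1 + |Λ|r²/δ. -/

import Mathlib

/-- Bounds on `γ̄ = e^{ν−λ}` in Bondi coordinates from the constraint
`∂_r log γ̄ = 2|Λ| r e^{2λ}` with `e^{2λ} ≤ 1/(δ + |Λ|r²)` and `γ̄(0) = 1`. -/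
theorem stmt_6 (δ Λ R : ℝ) (hδ : δ ∈ Set.Ioo 0 1) (hΛ : Λ < 0) (hR : 0 < R)
    (γ E : ℝ → ℝ)
    (hγpos : ∀ s ∈ Set.Icc 0 R, 0 < γ s)
    (hγ0 : γ 0 = 1)
    (hE : ∀ s ∈ Set.Icc 0 R, E s ∈ Set.Icc 0 (1 / (δ + |Λ| * s ^ 2)))
    (hd : ∀ s ∈ Set.Icc 0 R,
      HasDerivWithinAt (fun t => Real.log (γ t)) (2 * |Λ| * s * E s) (Set.Icc 0 R) s) :
    ∀ s ∈ Set.Icc 0 R, 1 ≤ γ s ∧ γ s ≤ 1 + |Λ| * s ^ 2 / δ := by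
  obtain ⟨hδ0, hδ1⟩ := hδ
  have hL : 0 < |Λ| := abs_pos.mpr (ne_of_lt hΛ)
  have h0mem : (0 : ℝ) ∈ Set.Icc (0 : ℝ) R := ⟨le_rfl, hR.le⟩
  have hint : interior (Set.Icc (0 : ℝ) R) = Set.Ioo 0 R := interior_Icc
  have hIoo : Set.Ioo (0 : ℝ) R ⊆ Set.Icc 0 R := Set.Ioo_subset_Icc_self
  have hcontlog : ContinuousOn (fun t => Real.log (γ t)) (Set.Icc 0 R) :=
    fun s hs => (hd s hs).continuousWithinAt
  have hpos : ∀ s : ℝ, 0 < δ + |Λ| * s ^ 2 := fun s => by positivity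
  -- lower bound: log γ is monotone
  have hmono1 : MonotoneOn (fun t => Real.log (γ t)) (Set.Icc 0 R) := by
    apply monotoneOn_of_hasDerivWithinAt_nonneg (convex_Icc 0 R) hcontlog
      (f' := fun s => 2 * |Λ| * s * E s)
    · intro x hx
      rw [hint] at hx ⊢
      exact (hd x (hIoo hx)).mono hIoo
    · intro x hx
      rw [hint] at hx
      have hE0 := (hE x (hIoo hx)).1
      have := hx.1
      positivity
  -- upper bound comparison function
  set g : ℝ → ℝ := fun t => Real.log (1 + |Λ| * t ^ 2 / δ) - Real.log (γ t) with hg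
  have hgpos : ∀ s : ℝ, (0:ℝ) < 1 + |Λ| * s ^ 2 / δ := fun s => by positivity
  have hgd : ∀ s ∈ Set.Icc (0:ℝ) R, HasDerivWithinAt g
      (2 * |Λ| * s / (δ + |Λ| * s ^ 2) - 2 * |Λ| * s * E s) (Set.Icc 0 R) s := by
    intro s hs
    have h1 : HasDerivWithinAt (fun t : ℝ => 1 + |Λ| * t ^ 2 / δ)
        (|Λ| * (2 * s) / δ) (Set.Icc 0 R) s := by
      have : HasDerivWithinAt (fun t : ℝ => t ^ 2) (2 * s) (Set.Icc 0 R) s := by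
        simpa using (hasDerivWithinAt_pow 2 s : HasDerivWithinAt (fun x : ℝ => x ^ 2) _ (Set.Icc 0 R) s)
      simpa [mul_div_assoc] using ((this.const_mul |Λ|).div_const δ).const_add 1
    have h2 : HasDerivWithinAt (fun t : ℝ => Real.log (1 + |Λ| * t ^ 2 / δ))
        (|Λ| * (2 * s) / δ / (1 + |Λ| * s ^ 2 / δ)) (Set.Icc 0 R) s :=
      h1.log (ne_of_gt (hgpos s))
    have heq : |Λ| * (2 * s) / δ / (1 + |Λ| * s ^ 2 / δ)
        = 2 * |Λ| * s / (δ + |Λ| * s ^ 2) := by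
      have hd1 : (1 : ℝ) + |Λ| * s ^ 2 / δ ≠ 0 := ne_of_gt (hgpos s)
      have hd2 : δ + |Λ| * s ^ 2 ≠ 0 := ne_of_gt (hpos s)
      field_simp
    rw [← heq]
    exact h2.sub (hd s hs)
  have hmono2 : MonotoneOn g (Set.Icc 0 R) := by
    apply monotoneOn_of_hasDerivWithinAt_nonneg (convex_Icc 0 R)
      (f' := fun s => 2 * |Λ| * s / (δ + |Λ| * s ^ 2) - 2 * |Λ| * s * E s)
    · exact fun s hs => (hgd s hs).continuousWithinAt
    · intro x hx
      rw [hint] at hx ⊢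
      exact (hgd x (hIoo hx)).mono hIoo
    · intro x hx
      rw [hint] at hx
      have hE1 := (hE x (hIoo hx)).2
      have hx0 : 0 ≤ x := hx.1.le
      have h2x : 0 ≤ 2 * |Λ| * x := by positivity
      have := mul_le_mul_of_nonneg_left hE1 h2x
      rw [sub_nonneg]
      calc 2 * |Λ| * x * E x ≤ 2 * |Λ| * x * (1 / (δ + |Λ| * x ^ 2)) := this
        _ = 2 * |Λ| * x / (δ + |Λ| * x ^ 2) := by ring
  intro s hs
  have hsmem : s ∈ Set.Icc (0:ℝ) R := hs
  have hγs := hγpos s hs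
  constructor
  · have := hmono1 h0mem hs hs.1
    simp only [hγ0, Real.log_one] at this
    have := Real.exp_le_exp.mpr this
    rwa [Real.exp_zero, Real.exp_log hγs] at this
  · have hg0 : g 0 = 0 := by simp [hg, hγ0]
    have := hmono2 h0mem hs hs.1
    rw [hg0] at this
    simp only [hg, sub_nonneg] at this
    have := Real.exp_le_exp.mpr this
    rwa [Real.exp_log hγs, Real.exp_log (hgpos s)] at this
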